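/- arXiv:1408.5812 — 3 statements merged into one kernel-verified Lean document; each statement's English description precedes it below -/
import Mathlib

section
/- Let μ be a probability measure on a space X and let (A_R)_{R≥1} be a decreasing family of measurable sets such that μ(A_R)·R → πεc as R → ∞ for some constants ε, c > 0. Define Ψ_R = (2/π)·ψ·(1_{A_1} − 1_{A_R}) where ψ(q) = R₁ on A_{R₁} \ A_{R₁'} with R₁ the depth parameter (i.e., ψ takes value approximately S on A_S \ ∪_{S'>S} A_{S'}). Then lim_{R→∞} ‖Ψ_R‖_{L¹}/log R = 2εc. -/
open MeasureTheory Real Filter Set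
open scoped ENNReal

lemma lint_aux (C a b : ℝ) (hC : 0 ≤ C) (ha : 0 < a) (hab : a ≤ b) :
    ∫⁻ t in Set.Ioc a b, ENNReal.ofReal (C / t) = ENNReal.ofReal (C * (Real.log b - Real.log a)) := by
  have hb : 0 < b := lt_of_lt_of_le ha hab
  have hcont : ContinuousOn (fun t : ℝ => C / t) (Set.Icc a b) := by
    apply ContinuousOn.div continuousOn_const continuousOn_id
    intro t ht
    exact ne_of_gt (lt_of_lt_of_le ha ht.1)
  have hint : IntegrableOn (fun t : ℝ => C / t) (Set.Ioc a b) :=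
    (hcont.integrableOn_Icc).mono_set Set.Ioc_subset_Icc_self
  have hnn : 0 ≤ᵐ[volume.restrict (Set.Ioc a b)] fun t : ℝ => C / t := by
    filter_upwards [ae_restrict_mem measurableSet_Ioc] with t ht
    exact div_nonneg hC (le_of_lt (lt_of_lt_of_le ha ht.1.le))
  rw [← ofReal_integral_eq_lintegral_ofReal hint hnn]
  congr 1
  rw [← intervalIntegral.integral_of_le hab]
  have h0 : (0:ℝ) ∉ Set.uIcc a b := by
    rw [Set.uIcc_of_le hab]
    rintro ⟨h1, -⟩
    exact absurd h1 (not_le.2 ha)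
  simp_rw [div_eq_mul_inv]
  rw [intervalIntegral.integral_const_mul, integral_inv h0, Real.log_div hb.ne' ha.ne']

set_option maxHeartbeats 1000000 in
/-- L¹ asymptotics of the truncations Ψ_R (Lemma 5.1, first part, abstract version). -/
theorem stmt_4 {X : Type*} [MeasurableSpace X] (μ : Measure X) [IsProbabilityMeasure μ]
    (ψ : X → ℝ) (hψmeas : Measurable ψ) (hψpos : ∀ x, 0 ≤ ψ x)
    (ε c : ℝ) (hε : 0 < ε) (hc : 0 < c)
    (htail : Tendsto (fun S : ℝ => (μ {x | 2 / π * S ≤ ψ x}).toReal * S)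
      atTop (nhds (π * ε * c))) :
    Tendsto
      (fun R : ℝ =>
        (∫ x in {x | 2 / π ≤ ψ x ∧ ψ x < 2 / π * R}, ψ x ∂μ) / Real.log R)
      atTop (nhds (2 * ε * c)) := by
  have hπ : (0:ℝ) < π := Real.pi_pos
  have hπ2 : (2:ℝ) < π := by linarith [Real.pi_gt_three]
  set L : ℝ := π * ε * c with hLdef
  have hL : 0 < L := by positivity
  -- tail bounds
  have htail' : ∀ δ : ℝ, 0 < δ → ∃ S₀ : ℝ, 1 ≤ S₀ ∧ ∀ S, S₀ ≤ S →
      μ {x | 2 / π * S ≤ ψ x} ≤ ENNReal.ofReal ((L + δ) / S) ∧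
      ENNReal.ofReal ((L - δ) / S) ≤ μ {x | 2 / π * S ≤ ψ x} := by
    intro δ hδ
    obtain ⟨N, hN⟩ := Metric.tendsto_atTop.1 htail δ hδ
    refine ⟨max N 1, le_max_right _ _, fun S hS => ?_⟩
    have hS1 : (1:ℝ) ≤ S := le_trans (le_max_right N 1) hS
    have hSpos : (0:ℝ) < S := lt_of_lt_of_le one_pos hS1
    have hd := hN S (le_trans (le_max_left _ _) hS)
    rw [Real.dist_eq, abs_lt] at hd
    have hfin : μ {x | 2 / π * S ≤ ψ x} ≠ ⊤ := measure_ne_top μ _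
    constructor
    · rw [← ENNReal.ofReal_toReal hfin]
      apply ENNReal.ofReal_le_ofReal
      rw [le_div_iff₀ hSpos]
      linarith [hd.2]
    · rw [← ENNReal.ofReal_toReal hfin]
      apply ENNReal.ofReal_le_ofReal
      rw [div_le_iff₀ hSpos]
      linarith [hd.1]
  -- sets, measurability
  have hEm : ∀ R : ℝ, MeasurableSet {x | 2 / π ≤ ψ x ∧ ψ x < 2 / π * R} := fun R =>
    (measurableSet_le measurable_const hψmeas).inter (measurableSet_lt hψmeas measurable_const)
  -- finiteness of lintegral
  have hJfin : ∀ R : ℝ, (∫⁻ x in {x | 2 / π ≤ ψ x ∧ ψ x < 2 / π * R}, ENNReal.ofReal (ψ x) ∂μ) ≠ ⊤ := by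
    intro R
    have h1 : (∫⁻ x in {x | 2 / π ≤ ψ x ∧ ψ x < 2 / π * R}, ENNReal.ofReal (ψ x) ∂μ)
        ≤ ∫⁻ _ in {x | 2 / π ≤ ψ x ∧ ψ x < 2 / π * R}, ENNReal.ofReal (2 / π * R) ∂μ := by
      apply lintegral_mono_ae
      filter_upwards [ae_restrict_mem (hEm R)] with x hx
      exact ENNReal.ofReal_le_ofReal hx.2.le
    rw [lintegral_const] at h1
    refine ne_top_of_le_ne_top ?_ h1
    exact ENNReal.mul_ne_top ENNReal.ofReal_ne_top (measure_ne_top _ _)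
  -- layer cake
  have hlayer : ∀ R : ℝ, (∫⁻ x in {x | 2 / π ≤ ψ x ∧ ψ x < 2 / π * R}, ENNReal.ofReal (ψ x) ∂μ)
      = ∫⁻ t in Set.Ioi (0:ℝ), μ ({a | t < ψ a} ∩ {x | 2 / π ≤ ψ x ∧ ψ x < 2 / π * R}) := by
    intro R
    rw [lintegral_eq_lintegral_meas_lt (μ.restrict _) (ae_of_all _ hψpos) hψmeas.aemeasurable]
    apply lintegral_congr_ae
    filter_upwards [] with t
    rw [Measure.restrict_apply (measurableSet_lt measurable_const hψmeas)]
  -- Bochner integral = toReal of lintegral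
  have hIeq : ∀ R : ℝ, (∫ x in {x | 2 / π ≤ ψ x ∧ ψ x < 2 / π * R}, ψ x ∂μ)
      = (∫⁻ x in {x | 2 / π ≤ ψ x ∧ ψ x < 2 / π * R}, ENNReal.ofReal (ψ x) ∂μ).toReal := fun R =>
    integral_eq_lintegral_of_nonneg_ae (ae_of_all _ hψpos) hψmeas.aestronglyMeasurable
  rw [tendsto_order]
  constructor
  · -- lower bound branch
    intro a ha
    set a' : ℝ := max a (ε * c) with ha'def
    have ha'pos : 0 < a' := lt_of_lt_of_le (by positivity) (le_max_right _ _)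
    have ha'lt : a' < 2 * ε * c := max_lt ha (by linarith [mul_pos hε hc])
    have ha'ge : a ≤ a' := le_max_left _ _
    have hsuff : ∀ᶠ R in atTop,
        a' < (∫ x in {x | 2 / π ≤ ψ x ∧ ψ x < 2 / π * R}, ψ x ∂μ) / Real.log R → True := by
      exact Eventually.of_forall fun _ _ => trivial
    suffices h : ∀ᶠ R in atTop,
        a' < (∫ x in {x | 2 / π ≤ ψ x ∧ ψ x < 2 / π * R}, ψ x ∂μ) / Real.log R by
      filter_upwards [h] with R hR
      exact lt_of_le_of_lt ha'ge hR
    set m : ℝ := (a' + 2 * ε * c) / 2 with hmdef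
    set δ : ℝ := (2 * ε * c - a') / 2 with hδdef
    have hδ : 0 < δ := by rw [hδdef]; linarith
    have hm1 : a' < m := by rw [hmdef]; linarith
    have hmpos : 0 < m := lt_trans ha'pos hm1
    set κ : ℝ := 2 * m / (a' + m) with hκdef
    have ham : 0 < a' + m := by linarith
    have hκ1 : 1 < κ := by
      rw [hκdef, lt_div_iff₀ ham]
      linarith
    have hκpos : 0 < κ := lt_trans one_pos hκ1
    set C₂ : ℝ := 2 * (L - δ) / (π * κ) with hC₂def
    have hC₂gt : a' < C₂ := by
      have e1 : C₂ = (2 * ε * c - 2 * δ / π) / κ := by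
        rw [hC₂def, hLdef]
        field_simp
      have e2 : m / κ = (a' + m) / 2 := by
        rw [hκdef]
        field_simp
      have h1 : m < 2 * ε * c - 2 * δ / π := by
        have h2 : 2 * δ / π < δ := by
          rw [div_lt_iff₀ hπ]; linarith [mul_pos hδ (sub_pos.2 hπ2)]
        have : δ = 2 * ε * c - m := by rw [hδdef, hmdef]; ring
        linarith
      have h3 : a' < m / κ := by rw [e2]; linarith
      have h4 : m / κ < (2 * ε * c - 2 * δ / π) / κ := (div_lt_div_iff_of_pos_right hκpos).2 h1
      rw [e1]
      exact lt_trans h3 h4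
    have hC₂pos : 0 < C₂ := lt_trans ha'pos hC₂gt
    obtain ⟨S₀, hS₀1, hS₀⟩ := htail' δ hδ
    have hS₀pos : 0 < S₀ := lt_of_lt_of_le one_pos hS₀1
    set t₁ : ℝ := 2 * S₀ / π with ht₁def
    have ht₁pos : 0 < t₁ := by positivity
    set D₀ : ℝ := 2 * (L + δ) / (π * κ) with hD₀def
    have hD₀nn : 0 ≤ D₀ := by positivity
    set A₂ : ℝ := C₂ * (Real.log (2 / (π * κ)) - Real.log t₁) - D₀ with hA₂def
    have hkey : ∀ R : ℝ, max (κ * S₀) 1 ≤ R →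
        C₂ * Real.log R + A₂ ≤ ∫ x in {x | 2 / π ≤ ψ x ∧ ψ x < 2 / π * R}, ψ x ∂μ := by
      intro R hR
      have hR1 : (1:ℝ) ≤ R := le_trans (le_max_right _ _) hR
      have hRpos : (0:ℝ) < R := lt_of_lt_of_le one_pos hR1
      have hRκ : κ * S₀ ≤ R := le_trans (le_max_left _ _) hR
      have hRS₀ : S₀ ≤ R := le_trans (le_mul_of_one_le_left hS₀pos.le hκ1.le) hRκ
      set b' : ℝ := 2 * R / (π * κ) with hb'def
      have hb'ge : t₁ ≤ b' := by
        rw [ht₁def, hb'def, div_le_div_iff₀ hπ (by positivity)]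
        have h5 := mul_le_mul_of_nonneg_left hRκ (by positivity : (0:ℝ) ≤ 2 * π)
        linarith
      -- pointwise lower bound
      have hGge : ∀ t ∈ Set.Ioc t₁ b',
          ENNReal.ofReal (C₂ / t) - ENNReal.ofReal ((L + δ) / R)
            ≤ μ ({a | t < ψ a} ∩ {x | 2 / π ≤ ψ x ∧ ψ x < 2 / π * R}) := by
        intro t ht
        have htpos : 0 < t := lt_trans ht₁pos ht.1
        set St : ℝ := π * κ * t / 2 with hStdef
        have hSt : S₀ ≤ St := by
          rw [hStdef]
          have h6 : κ * S₀ ≤ π * κ * t / 2 := by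
            rw [le_div_iff₀ (by norm_num : (0:ℝ) < 2)]
            have ht1 : t₁ < t := ht.1
            rw [ht₁def] at ht1
            rw [div_lt_iff₀ hπ] at ht1
            have h7 := mul_le_mul_of_nonneg_left ht1.le hκpos.le
            linarith
          linarith [le_mul_of_one_le_left hS₀pos.le hκ1.le]
        have hincl : {x | 2 / π * St ≤ ψ x} \ {x | 2 / π * R ≤ ψ x}
            ⊆ {a | t < ψ a} ∩ {x | 2 / π ≤ ψ x ∧ ψ x < 2 / π * R} := by
          rintro x ⟨hx1, hx2⟩
          simp only [Set.mem_setOf_eq] at hx1 hx2 ⊢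
          have hSteq : 2 / π * St = κ * t := by
            rw [hStdef]; field_simp
          rw [hSteq] at hx1
          have hκt : t < κ * t := lt_mul_of_one_lt_left htpos hκ1
          have h2π : 2 / π ≤ κ * t := by
            have ht1 : t₁ < t := ht.1
            have h1 : 2 / π ≤ t₁ := by
              rw [ht₁def]
              apply div_le_div_of_nonneg_right (by linarith : (2:ℝ) ≤ 2 * S₀) hπ.le
            linarith
          refine ⟨lt_of_lt_of_le hκt hx1, le_trans h2π hx1, ?_⟩
          exact lt_of_not_ge hx2
        have hmeas : μ ({a | t < ψ a} ∩ {x | 2 / π ≤ ψ x ∧ ψ x < 2 / π * R})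
            ≥ μ {x | 2 / π * St ≤ ψ x} - μ {x | 2 / π * R ≤ ψ x} :=
          le_trans le_measure_diff (measure_mono hincl)
        refine le_trans ?_ hmeas
        apply tsub_le_tsub
        · refine le_trans (le_of_eq ?_) (hS₀ St hSt).2
          congr 1
          rw [hC₂def, hStdef]
          field_simp
        · exact (hS₀ R hRS₀).1
      -- integrate
      have hJge : ENNReal.ofReal (C₂ * (Real.log b' - Real.log t₁) - D₀)
          ≤ ∫⁻ x in {x | 2 / π ≤ ψ x ∧ ψ x < 2 / π * R}, ENNReal.ofReal (ψ x) ∂μ := by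
        rw [hlayer R]
        have step0 : (∫⁻ t in Set.Ioc t₁ b',
            μ ({a | t < ψ a} ∩ {x | 2 / π ≤ ψ x ∧ ψ x < 2 / π * R}))
            ≤ ∫⁻ t in Set.Ioi (0:ℝ),
            μ ({a | t < ψ a} ∩ {x | 2 / π ≤ ψ x ∧ ψ x < 2 / π * R}) :=
          lintegral_mono_set (fun x hx => lt_trans ht₁pos hx.1)
        refine le_trans ?_ step0
        have step1 : (∫⁻ t in Set.Ioc t₁ b',
            (ENNReal.ofReal (C₂ / t) - ENNReal.ofReal ((L + δ) / R)))
            ≤ ∫⁻ t in Set.Ioc t₁ b',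
            μ ({a | t < ψ a} ∩ {x | 2 / π ≤ ψ x ∧ ψ x < 2 / π * R}) := by
          apply lintegral_mono_ae
          filter_upwards [ae_restrict_mem measurableSet_Ioc] with t ht
          exact hGge t ht
        refine le_trans ?_ step1
        have step2 : (∫⁻ t in Set.Ioc t₁ b', ENNReal.ofReal (C₂ / t))
            - (∫⁻ _ in Set.Ioc t₁ b', ENNReal.ofReal ((L + δ) / R))
            ≤ ∫⁻ t in Set.Ioc t₁ b',
              (ENNReal.ofReal (C₂ / t) - ENNReal.ofReal ((L + δ) / R)) := by
          rw [tsub_le_iff_right]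
          rw [← lintegral_add_right _ measurable_const]
          apply lintegral_mono
          intro t
          exact le_tsub_add
        refine le_trans ?_ step2
        rw [lint_aux C₂ t₁ b' hC₂pos.le ht₁pos hb'ge]
        have hY : (∫⁻ _ in Set.Ioc t₁ b', ENNReal.ofReal ((L + δ) / R)) ≤ ENNReal.ofReal D₀ := by
          rw [lintegral_const, Measure.restrict_apply MeasurableSet.univ, Set.univ_inter,
            Real.volume_Ioc, ← ENNReal.ofReal_mul (by positivity)]
          apply ENNReal.ofReal_le_ofReal
          rw [hD₀def, hb'def]
          have h1 : (L + δ) / R * (2 * R / (π * κ) - t₁) ≤ (L + δ) / R * (2 * R / (π * κ)) := by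
            apply mul_le_mul_of_nonneg_left _ (by positivity)
            linarith
          refine le_trans h1 (le_of_eq ?_)
          field_simp
        refine le_trans (le_of_eq (ENNReal.ofReal_sub _ hD₀nn)) ?_
        exact tsub_le_tsub le_rfl hY
      -- pass to toReal
      rw [hIeq R]
      have h1 : C₂ * (Real.log b' - Real.log t₁) - D₀
          ≤ (∫⁻ x in {x | 2 / π ≤ ψ x ∧ ψ x < 2 / π * R}, ENNReal.ofReal (ψ x) ∂μ).toReal := by
        refine le_trans ?_ (ENNReal.toReal_mono (hJfin R) hJge)
        rw [ENNReal.toReal_ofReal']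
        exact le_max_left _ _
      refine le_trans (le_of_eq ?_) h1
      have hlogb' : Real.log b' = Real.log (2 / (π * κ)) + Real.log R := by
        rw [hb'def]
        have : 2 * R / (π * κ) = 2 / (π * κ) * R := by ring
        rw [this, Real.log_mul (by positivity) hRpos.ne']
      rw [hlogb', hA₂def]
      ring
    -- conclude
    have hloginv : Tendsto (fun R : ℝ => A₂ / Real.log R) atTop (nhds 0) := by
      have := (tendsto_inv_atTop_zero.comp Real.tendsto_log_atTop).const_mul A₂
      simp only [mul_zero] at this
      simpa [div_eq_mul_inv, Function.comp] using this
    have htend : Tendsto (fun R : ℝ => C₂ + A₂ / Real.log R) atTop (nhds C₂) := by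
      have h2 := (tendsto_const_nhds (α := ℝ) (x := C₂)).add hloginv
      simpa using h2
    filter_upwards [eventually_ge_atTop (max (κ * S₀) 1), eventually_gt_atTop 1,
      htend.eventually (eventually_gt_nhds hC₂gt)] with R hR1 hR2 hR3
    have hlogpos : 0 < Real.log R := Real.log_pos hR2
    calc a' < C₂ + A₂ / Real.log R := hR3
      _ = (C₂ * Real.log R + A₂) / Real.log R := by field_simp
      _ ≤ (∫ x in {x | 2 / π ≤ ψ x ∧ ψ x < 2 / π * R}, ψ x ∂μ) / Real.log R := by
          apply div_le_div_of_nonneg_right (hkey R hR1) hlogpos.le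
  · -- upper bound branch
    intro b hb
    set δ : ℝ := b - 2 * ε * c with hδdef
    have hδ : 0 < δ := by simp [hδdef]; linarith
    set C₁ : ℝ := 2 * (L + δ) / π with hC₁def
    have hC₁pos : 0 < C₁ := by positivity
    have hC₁eq : C₁ = 2 * ε * c + 2 * δ / π := by
      rw [hC₁def, hLdef]; field_simp
    have hC₁lt : C₁ < b := by
      rw [hC₁eq]
      have h2 : 2 * δ / π < δ := by
        rw [div_lt_iff₀ hπ]; linarith [mul_pos hδ (sub_pos.2 hπ2)]
      linarith
    obtain ⟨S₀, hS₀1, hS₀⟩ := htail' δ hδ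
    set t₀ : ℝ := 2 * S₀ / π with ht₀def
    have ht₀pos : 0 < t₀ := by positivity
    set A₁ : ℝ := t₀ + C₁ * (Real.log (2 / π) - Real.log t₀) with hA₁def
    -- the key estimate
    have hkey : ∀ R : ℝ, S₀ ≤ R →
        (∫ x in {x | 2 / π ≤ ψ x ∧ ψ x < 2 / π * R}, ψ x ∂μ) ≤ C₁ * Real.log R + A₁ := by
      intro R hRS
      have hR1 : (1:ℝ) ≤ R := le_trans hS₀1 hRS
      have hRpos : (0:ℝ) < R := lt_of_lt_of_le one_pos hR1
      have hb' : t₀ ≤ 2 / π * R := by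
        rw [ht₀def]
        rw [div_le_iff₀ hπ]
        calc 2 * S₀ ≤ 2 * R := by linarith
        _ = 2 / π * R * π := by field_simp
      set U : ℝ → ℝ≥0∞ := fun t =>
        (Set.Ioc (0:ℝ) t₀).indicator (fun _ => (1:ℝ≥0∞)) t +
        (Set.Ioc t₀ (2 / π * R)).indicator (fun t => ENNReal.ofReal (C₁ / t)) t with hUdef
      have hGle : ∀ t ∈ Set.Ioi (0:ℝ),
          μ ({a | t < ψ a} ∩ {x | 2 / π ≤ ψ x ∧ ψ x < 2 / π * R}) ≤ U t := by
        intro t ht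
        have htpos : (0:ℝ) < t := ht
        rcases le_or_gt t t₀ with h1 | h1
        · refine le_trans ?_ le_self_add
          rw [Set.indicator_of_mem (Set.mem_Ioc.2 ⟨htpos, h1⟩)]
          exact prob_le_one
        · rcases lt_or_ge t (2 / π * R) with h2 | h2
          · refine le_trans ?_ le_add_self
            rw [Set.indicator_of_mem (Set.mem_Ioc.2 ⟨h1, h2.le⟩)]
            have hsub : {a | t < ψ a} ∩ {x | 2 / π ≤ ψ x ∧ ψ x < 2 / π * R}
                ⊆ {x | 2 / π * (π * t / 2) ≤ ψ x} := by
              intro x hx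
              have heq : 2 / π * (π * t / 2) = t := by
                field_simp
              simp only [Set.mem_setOf_eq, heq]
              exact hx.1.le
            refine le_trans (measure_mono hsub) (le_trans ((hS₀ (π * t / 2) ?_).1) ?_)
            · rw [ht₀def] at h1
              rw [div_lt_iff₀ hπ] at h1
              linarith
            · apply ENNReal.ofReal_le_ofReal
              apply le_of_eq
              rw [hC₁def]
              field_simp
          · have hempty : {a | t < ψ a} ∩ {x | 2 / π ≤ ψ x ∧ ψ x < 2 / π * R} = ∅ := by
              rw [Set.eq_empty_iff_forall_notMem]
              rintro x ⟨hx1, -, hx3⟩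
              simp only [Set.mem_setOf_eq] at hx1
              linarith
            rw [hempty, measure_empty]
            exact zero_le
      have hJle : (∫⁻ x in {x | 2 / π ≤ ψ x ∧ ψ x < 2 / π * R}, ENNReal.ofReal (ψ x) ∂μ)
          ≤ ENNReal.ofReal (t₀ + C₁ * (Real.log (2 / π * R) - Real.log t₀)) := by
        rw [hlayer R]
        have step1 : (∫⁻ t in Set.Ioi (0:ℝ),
            μ ({a | t < ψ a} ∩ {x | 2 / π ≤ ψ x ∧ ψ x < 2 / π * R})) ≤ ∫⁻ t in Set.Ioi (0:ℝ), U t := by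
          apply lintegral_mono_ae
          filter_upwards [ae_restrict_mem measurableSet_Ioi] with t ht
          exact hGle t ht
        refine le_trans step1 ?_
        rw [hUdef]
        rw [lintegral_add_left (measurable_const.indicator measurableSet_Ioc)]
        rw [lintegral_indicator measurableSet_Ioc, lintegral_indicator measurableSet_Ioc]
        rw [Measure.restrict_restrict measurableSet_Ioc, Measure.restrict_restrict measurableSet_Ioc]
        have hint1 : Set.Ioc (0:ℝ) t₀ ∩ Set.Ioi (0:ℝ) = Set.Ioc (0:ℝ) t₀ :=
          Set.inter_eq_left.2 (fun x hx => hx.1)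
        have hint2 : Set.Ioc t₀ (2 / π * R) ∩ Set.Ioi (0:ℝ) = Set.Ioc t₀ (2 / π * R) :=
          Set.inter_eq_left.2 (fun x hx => lt_trans ht₀pos hx.1)
        rw [hint1, hint2, setLIntegral_one, lint_aux C₁ t₀ _ hC₁pos.le ht₀pos hb']
        rw [Real.volume_Ioc, sub_zero]
        rw [← ENNReal.ofReal_add ht₀pos.le]
        · apply mul_nonneg hC₁pos.le
          rw [sub_nonneg]
          exact Real.log_le_log ht₀pos hb'
      rw [hIeq R]
      have hw : 0 ≤ t₀ + C₁ * (Real.log (2 / π * R) - Real.log t₀) := by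
        have h8 := Real.log_le_log ht₀pos hb'
        have h9 : 0 ≤ C₁ * (Real.log (2 / π * R) - Real.log t₀) :=
          mul_nonneg hC₁pos.le (sub_nonneg.2 h8)
        linarith
      calc (∫⁻ x in {x | 2 / π ≤ ψ x ∧ ψ x < 2 / π * R}, ENNReal.ofReal (ψ x) ∂μ).toReal
          ≤ (ENNReal.ofReal (t₀ + C₁ * (Real.log (2 / π * R) - Real.log t₀))).toReal :=
            ENNReal.toReal_mono ENNReal.ofReal_ne_top hJle
        _ = t₀ + C₁ * (Real.log (2 / π * R) - Real.log t₀) := ENNReal.toReal_ofReal hw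
        _ = C₁ * Real.log R + A₁ := by
            rw [Real.log_mul (by positivity) hRpos.ne', hA₁def]; ring
    -- conclude
    have hloginv : Tendsto (fun R : ℝ => A₁ / Real.log R) atTop (nhds 0) := by
      have := (tendsto_inv_atTop_zero.comp Real.tendsto_log_atTop).const_mul A₁
      simp only [mul_zero] at this
      simpa [div_eq_mul_inv, Function.comp] using this
    have htend : Tendsto (fun R : ℝ => C₁ + A₁ / Real.log R) atTop (nhds C₁) := by
      have h2 := (tendsto_const_nhds (α := ℝ) (x := C₁)).add hloginv
      simpa using h2
    filter_upwards [eventually_ge_atTop S₀, eventually_gt_atTop 1,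
      htend.eventually (eventually_lt_nhds hC₁lt)] with R hR1 hR2 hR3
    have hlogpos : 0 < Real.log R := Real.log_pos hR2
    calc (∫ x in {x | 2 / π ≤ ψ x ∧ ψ x < 2 / π * R}, ψ x ∂μ) / Real.log R
        ≤ (C₁ * Real.log R + A₁) / Real.log R := by
          apply div_le_div_of_nonneg_right (hkey R hR1) hlogpos.le
      _ = C₁ + A₁ / Real.log R := by field_simp
      _ < b := hR3
end

section
/- Let μ be a probability measure and ψ : X → [0,∞) measurable with μ(ψ ≥ (2/π)S) ~ πεc/S as S → ∞ for constants ε, c > 0. Let Ψ_R be ψ restricted to the set {1 ≤ (π/2)ψ < R} (zero elsewhere). Then lim_{R→∞} ‖Ψ_R‖_{L²}/√R = 2√(εc)/√π. -/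
open MeasureTheory Real Filter

/-- Cesàro-type lemma: if `h → L` at infinity and `h` is locally interval integrable,
then `(∫_a^R h)/R → L`. -/
lemma cesaro_aux {h : ℝ → ℝ} {L a : ℝ}
    (hInt : ∀ b, IntervalIntegrable h volume a b)
    (hlim : Tendsto h atTop (nhds L)) :
    Tendsto (fun R => (∫ t in a..R, h t) / R) atTop (nhds L) := by
  rw [Metric.tendsto_atTop] at hlim ⊢
  intro δ hδ
  obtain ⟨M0, hM0⟩ := hlim (δ / 4) (by linarith)
  set M : ℝ := max (max M0 a) 0 with hMdef
  have hMa : a ≤ M := le_trans (le_max_right M0 a) (le_max_left _ _)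
  have hM0' : M0 ≤ M := le_trans (le_max_left M0 a) (le_max_left _ _)
  have hMnn : (0:ℝ) ≤ M := le_max_right _ _
  set C : ℝ := |∫ t in a..M, h t| + |L| * M with hCdef
  have hCnn : 0 ≤ C := by positivity
  refine ⟨max (max M 1) (4 * C / δ), fun R hR => ?_⟩
  have hRM : M ≤ R := le_trans (le_trans (le_max_left M 1) (le_max_left _ _)) hR
  have hR1 : (1:ℝ) ≤ R := le_trans (le_trans (le_max_right M 1) (le_max_left _ _)) hR
  have hRC : 4 * C / δ ≤ R := le_trans (le_max_right _ _) hR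
  have hRpos : 0 < R := lt_of_lt_of_le one_pos hR1
  have hIMR : IntervalIntegrable h volume M R := (hInt M).symm.trans (hInt R)
  have hsplit : ∫ t in a..R, h t = (∫ t in a..M, h t) + ∫ t in M..R, h t :=
    (intervalIntegral.integral_add_adjacent_intervals (hInt M) hIMR).symm
  have herr : |(∫ t in M..R, h t) - L * (R - M)| ≤ δ / 4 * (R - M) := by
    have heq : (∫ t in M..R, h t) - L * (R - M) = ∫ t in M..R, (h t - L) := by
      rw [intervalIntegral.integral_sub hIMR intervalIntegrable_const,
        intervalIntegral.integral_const, smul_eq_mul]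
      ring
    rw [heq]
    have hbd := intervalIntegral.norm_integral_le_of_norm_le_const
      (f := fun t => h t - L) (C := δ / 4) (a := M) (b := R) ?_
    · rw [Real.norm_eq_abs] at hbd
      calc |∫ t in M..R, (h t - L)| ≤ δ / 4 * |R - M| := hbd
        _ = δ / 4 * (R - M) := by rw [abs_of_nonneg (by linarith)]
    · intro t ht
      rw [Set.uIoc_of_le hRM] at ht
      have hd : dist (h t) L < δ / 4 := hM0 t (le_trans hM0' ht.1.le)
      rw [Real.dist_eq] at hd
      simpa [Real.norm_eq_abs] using hd.le
  have key : |(∫ t in a..R, h t) - L * R| ≤ C + δ / 4 * R := by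
    have heq : (∫ t in a..R, h t) - L * R
        = (∫ t in a..M, h t) + (((∫ t in M..R, h t) - L * (R - M)) + (- (L * M))) := by
      rw [hsplit]; ring
    rw [heq]
    calc |(∫ t in a..M, h t) + (((∫ t in M..R, h t) - L * (R - M)) + (- (L * M)))|
        ≤ |∫ t in a..M, h t| + |((∫ t in M..R, h t) - L * (R - M)) + (- (L * M))| :=
          abs_add_le _ _
      _ ≤ |∫ t in a..M, h t| + (|(∫ t in M..R, h t) - L * (R - M)| + |(- (L * M))|) := by
          gcongr; exact abs_add_le _ _
      _ ≤ |∫ t in a..M, h t| + (δ / 4 * (R - M) + |L| * M) := by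
          gcongr
          rw [abs_neg, abs_mul, abs_of_nonneg hMnn]
      _ ≤ C + δ / 4 * R := by
          rw [hCdef]
          nlinarith [hMnn, hδ]
  have hfrac : C / R ≤ δ / 4 := by
    rw [div_le_iff₀ hRpos]
    have h4C : 4 * C ≤ R * δ := by
      have := (div_le_iff₀ hδ).mp hRC
      linarith
    nlinarith
  rw [Real.dist_eq]
  have heq2 : (∫ t in a..R, h t) / R - L = ((∫ t in a..R, h t) - L * R) / R := by
    field_simp
  rw [heq2, abs_div, abs_of_pos hRpos]
  calc |(∫ t in a..R, h t) - L * R| / R ≤ (C + δ / 4 * R) / R := by gcongr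
    _ = C / R + δ / 4 := by rw [add_div, mul_div_assoc, div_self (ne_of_gt hRpos), mul_one]
    _ < δ := by linarith

lemma tail_toReal_anti {X : Type*} [MeasurableSpace X] (μ : Measure X) [IsFiniteMeasure μ]
    (Φ : X → ℝ) : Antitone (fun s => (μ {x | s ≤ Φ x}).toReal) :=
  fun _ _ hst => ENNReal.toReal_mono (measure_ne_top μ _)
    (measure_mono fun _ hx => le_trans hst hx)

lemma tail_le_one {X : Type*} [MeasurableSpace X] (μ : Measure X) [IsProbabilityMeasure μ]
    (s : Set X) : (μ s).toReal ≤ 1 := by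
  have := ENNReal.toReal_mono (measure_ne_top μ Set.univ)
    (measure_mono (Set.subset_univ s))
  simpa using this

lemma tail_intOn {X : Type*} [MeasurableSpace X] (μ : Measure X) [IsProbabilityMeasure μ]
    (Φ : X → ℝ) (u v : ℝ) :
    IntegrableOn (fun s => 2 * s * (μ {x | s ≤ Φ x}).toReal) (Set.Ioc u v) volume := by
  apply Integrable.mono' (g := fun _ => 2 * (|u| + |v|)) (integrable_const _)
  · exact ((measurable_const.mul measurable_id).mul
      (tail_toReal_anti μ Φ).measurable).aestronglyMeasurable
  · refine (ae_restrict_iff' measurableSet_Ioc).2 (Filter.Eventually.of_forall fun s hs => ?_)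
    have h1 : |s| ≤ |u| + |v| := by
      have hu := neg_abs_le u
      have hv := le_abs_self v
      have hu' := abs_nonneg u
      have hv' := abs_nonneg v
      exact abs_le.mpr ⟨by linarith [hs.1.le], by linarith [hs.2]⟩
    have hg0 : 0 ≤ (μ {x | s ≤ Φ x}).toReal := ENNReal.toReal_nonneg
    have hg1 : (μ {x | s ≤ Φ x}).toReal ≤ 1 := tail_le_one μ _
    rw [Real.norm_eq_abs, abs_mul, abs_mul, abs_of_nonneg hg0, abs_two]
    nlinarith [abs_nonneg s]

/-- L² asymptotics of the truncations Ψ_R (Lemma 5.1, second part, abstract version). -/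
theorem stmt_5 {X : Type*} [MeasurableSpace X] (μ : Measure X) [IsProbabilityMeasure μ]
    (ψ : X → ℝ) (hψmeas : Measurable ψ) (hψpos : ∀ x, 0 ≤ ψ x)
    (ε c : ℝ) (hε : 0 < ε) (hc : 0 < c)
    (htail : Tendsto (fun S : ℝ => (μ {x | 2 / π * S ≤ ψ x}).toReal * S)
      atTop (nhds (π * ε * c))) :
    Tendsto
      (fun R : ℝ =>
        Real.sqrt (∫ x in {x | 2 / π ≤ ψ x ∧ ψ x < 2 / π * R}, ψ x ^ 2 ∂μ)
          / Real.sqrt R)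
      atTop (nhds (2 * Real.sqrt (ε * c) / Real.sqrt π)) := by
  have hπ : (0:ℝ) < π := Real.pi_pos
  set a : ℝ := 2 / π with ha_def
  have ha : 0 < a := by positivity
  set L : ℝ := 2 * (ε * c) with hL_def
  set G : ℝ → ℝ := fun t => (μ {x | t ≤ ψ x}).toReal with hG_def
  have hGanti : Antitone G := tail_toReal_anti μ ψ
  -- limit of t * G t
  have hGlim : Tendsto (fun t => t * G t) atTop (nhds L) := by
    have h1 : Tendsto (fun t : ℝ => π / 2 * t) atTop atTop :=
      Tendsto.const_mul_atTop (by positivity) tendsto_id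
    have h2 := htail.comp h1
    have harg : ∀ t : ℝ, a * (π / 2 * t) = t := fun t => by
      rw [ha_def]; field_simp
    have h3 : Tendsto (fun t => G t * (π / 2 * t)) atTop (nhds (π * ε * c)) := by
      apply h2.congr
      intro t
      simp only [Function.comp_apply, harg]; rfl
    have h4 := h3.const_mul (2 / π)
    have hval : 2 / π * (π * ε * c) = L := by
      rw [hL_def]; field_simp
    rw [hval] at h4
    apply h4.congr
    intro t
    field_simp
  have hGto0 : Tendsto G atTop (nhds 0) := by
    have h1 : Tendsto (fun t : ℝ => (t * G t) * t⁻¹) atTop (nhds (L * 0)) :=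
      hGlim.mul tendsto_inv_atTop_zero
    rw [mul_zero] at h1
    apply h1.congr'
    filter_upwards [eventually_ge_atTop (1:ℝ)] with t ht
    have ht' : t ≠ 0 := by linarith
    field_simp
  have hGiint : ∀ u v : ℝ, IntervalIntegrable (fun s => 2 * s * G s) volume u v := by
    intro u v
    rw [intervalIntegrable_iff]
    exact tail_intOn μ ψ _ _
  -- the main identity
  have main_id : ∀ R : ℝ, 1 ≤ R → ∃ E : ℝ, 0 ≤ E ∧ E ≤ a ^ 2 ∧
      (∫ x in {x | a ≤ ψ x ∧ ψ x < a * R}, ψ x ^ 2 ∂μ)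
        = E + ((∫ s in a..(a * R), 2 * s * G s) - G (a * R) * ((a * R) ^ 2 - a ^ 2)) := by
    intro R hR
    set b : ℝ := a * R with hb_def
    have hab : a ≤ b := le_mul_of_one_le_right ha.le hR
    have hb : 0 < b := lt_of_lt_of_le ha hab
    set A : Set X := {x | a ≤ ψ x ∧ ψ x < b} with hA_def
    have hA : MeasurableSet A := hψmeas measurableSet_Ico
    set Ψ : X → ℝ := A.indicator ψ with hΨ_def
    have hΨmeas : Measurable Ψ := hψmeas.indicator hA
    have hΨnn : ∀ x, 0 ≤ Ψ x := fun x => Set.indicator_apply_nonneg (fun _ => hψpos x)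
    have hΨlt : ∀ x, Ψ x < b := by
      intro x
      by_cases hx : x ∈ A
      · rw [hΨ_def, Set.indicator_of_mem hx]; exact hx.2
      · rw [hΨ_def, Set.indicator_of_notMem hx]; exact hb
    set f : X → ℝ := fun x => Ψ x ^ 2 with hf_def
    have hfmeas : Measurable f := hΨmeas.pow_const 2
    have hfnn : 0 ≤ᵐ[μ] f := Filter.Eventually.of_forall fun x => sq_nonneg _
    have hfbdd : f ≤ᵐ[μ] fun _ => b ^ 2 := Filter.Eventually.of_forall fun x => by
      have h1 := hΨnn x; have h2 := hΨlt x
      simp only [hf_def]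
      nlinarith
    have hfint : Integrable f μ := by
      apply Integrable.mono' (integrable_const (b ^ 2)) hfmeas.aestronglyMeasurable
      filter_upwards with x
      rw [Real.norm_eq_abs]
      simp only [hf_def]
      rw [abs_of_nonneg (sq_nonneg _)]
      have h1 := hΨnn x; have h2 := hΨlt x
      nlinarith
    have step1 : ∫ x in A, ψ x ^ 2 ∂μ = ∫ x, f x ∂μ := by
      rw [← integral_indicator hA]
      congr 1
      funext x
      by_cases hx : x ∈ A
      · simp [hf_def, hΨ_def, Set.indicator_of_mem hx]
      · simp [hf_def, hΨ_def, Set.indicator_of_notMem hx]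
    have step2 : ∫ x, f x ∂μ = ∫ t in Set.Ioc 0 (b ^ 2), (μ {x | t ≤ f x}).toReal :=
      hfint.integral_eq_integral_Ioc_meas_le hfnn hfbdd
    have step3 : Set.EqOn (fun t => (μ {x | t ≤ f x}).toReal)
        (fun t => (μ {x | Real.sqrt t ≤ Ψ x}).toReal) (Set.Ioc 0 (b ^ 2)) := by
      intro t ht
      have hseteq : {x | t ≤ f x} = {x | Real.sqrt t ≤ Ψ x} := by
        ext x
        simp only [Set.mem_setOf_eq, hf_def]
        constructor
        · intro h
          have h2 : Real.sqrt t ≤ Real.sqrt (Ψ x ^ 2) := Real.sqrt_le_sqrt h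
          rwa [Real.sqrt_sq (hΨnn x)] at h2
        · intro h
          have h2 : Real.sqrt t ^ 2 ≤ Ψ x ^ 2 :=
            pow_le_pow_left₀ (Real.sqrt_nonneg t) h 2
          rwa [Real.sq_sqrt ht.1.le] at h2
      simp only [hseteq]
    have himg : (fun s : ℝ => s ^ 2) '' (Set.Ioc 0 b) = Set.Ioc 0 (b ^ 2) := by
      ext t
      constructor
      · rintro ⟨s, hs, rfl⟩
        simp only [Set.mem_Ioc]
        exact ⟨pow_pos hs.1 2, by nlinarith [hs.1, hs.2]⟩
      · intro ht
        refine ⟨Real.sqrt t, ⟨Real.sqrt_pos.2 ht.1, ?_⟩, Real.sq_sqrt ht.1.le⟩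
        rw [show b = Real.sqrt (b ^ 2) from (Real.sqrt_sq hb.le).symm]
        exact Real.sqrt_le_sqrt ht.2
    have step4 : (∫ t in Set.Ioc 0 (b ^ 2), (μ {x | Real.sqrt t ≤ Ψ x}).toReal)
        = ∫ s in Set.Ioc 0 b, |2 * s| * (μ {x | Real.sqrt (s ^ 2) ≤ Ψ x}).toReal := by
      rw [← himg,
        integral_image_eq_integral_abs_deriv_smul measurableSet_Ioc
          (f' := fun s => 2 * s) ?_ ?_]
      · simp [smul_eq_mul]
      · intro s _
        have h := (hasDerivAt_pow 2 s).hasDerivWithinAt (s := Set.Ioc 0 b)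
        exact h.congr_deriv (by norm_num)
      · intro s hs t ht h
        have := congrArg Real.sqrt h
        rwa [Real.sqrt_sq hs.1.le, Real.sqrt_sq ht.1.le] at this
    set g : ℝ → ℝ := fun s => (μ {x | s ≤ Ψ x}).toReal with hg_def
    have step5 : Set.EqOn (fun s => |2 * s| * (μ {x | Real.sqrt (s ^ 2) ≤ Ψ x}).toReal)
        (fun s => 2 * s * g s) (Set.Ioc 0 b) := by
      intro s hs
      simp only [hg_def]
      rw [Real.sqrt_sq hs.1.le, abs_of_nonneg (by linarith [hs.1] : (0:ℝ) ≤ 2 * s)]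
    have keyid : ∫ x in A, ψ x ^ 2 ∂μ = ∫ s in Set.Ioc 0 b, 2 * s * g s := by
      rw [step1, step2, setIntegral_congr_fun measurableSet_Ioc step3, step4,
        setIntegral_congr_fun measurableSet_Ioc step5]
    have hsplit : (∫ s in Set.Ioc 0 b, 2 * s * g s)
        = (∫ s in Set.Ioc 0 a, 2 * s * g s) + ∫ s in Set.Ioc a b, 2 * s * g s := by
      rw [← setIntegral_union (Set.Ioc_disjoint_Ioc_of_le le_rfl) measurableSet_Ioc
        (tail_intOn μ Ψ 0 a) (tail_intOn μ Ψ a b),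
        Set.Ioc_union_Ioc_eq_Ioc ha.le hab]
    have hsec : Set.EqOn (fun s => 2 * s * g s)
        (fun s => 2 * s * G s - 2 * s * G b) (Set.Ioc a b) := by
      intro s hs
      have hseq : {x | s ≤ Ψ x} = {x | s ≤ ψ x} \ {x | b ≤ ψ x} := by
        ext x
        simp only [Set.mem_setOf_eq, Set.mem_diff, not_le]
        constructor
        · intro h
          by_cases hx : x ∈ A
          · rw [hΨ_def, Set.indicator_of_mem hx] at h; exact ⟨h, hx.2⟩
          · rw [hΨ_def, Set.indicator_of_notMem hx] at h
            exfalso; linarith [hs.1, ha]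
        · rintro ⟨h1, h2⟩
          have hx : x ∈ A := ⟨le_trans hs.1.le h1, h2⟩
          rw [hΨ_def, Set.indicator_of_mem hx]; exact h1
      have hsub : {x | b ≤ ψ x} ⊆ {x | s ≤ ψ x} := fun x hx => le_trans hs.2 hx
      have hmb : MeasurableSet {x | b ≤ ψ x} := hψmeas measurableSet_Ici
      have hdiff : μ ({x | s ≤ ψ x} \ {x | b ≤ ψ x})
          = μ {x | s ≤ ψ x} - μ {x | b ≤ ψ x} :=
        measure_diff hsub hmb.nullMeasurableSet (measure_ne_top μ _)
      simp only [hg_def, hG_def]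
      rw [hseq, hdiff, ENNReal.toReal_sub_of_le (measure_mono hsub) (measure_ne_top μ _)]
      ring
    have hIocint2 : IntegrableOn (fun s => 2 * s * G b) (Set.Ioc a b) volume :=
      Continuous.integrableOn_Ioc ((continuous_const.mul continuous_id).mul continuous_const)
    have hIoc2s : ∫ s in Set.Ioc a b, (2 * s) = b ^ 2 - a ^ 2 := by
      rw [← intervalIntegral.integral_of_le hab, intervalIntegral.integral_const_mul,
        integral_id]
      ring
    have hsec_int : (∫ s in Set.Ioc a b, 2 * s * g s)
        = (∫ s in Set.Ioc a b, 2 * s * G s) - G b * (b ^ 2 - a ^ 2) := by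
      rw [setIntegral_congr_fun measurableSet_Ioc hsec,
        integral_sub (tail_intOn μ ψ a b) hIocint2]
      congr 1
      rw [show (fun s => 2 * s * G b) = fun s => (2 * s) * G b from rfl,
        integral_mul_const, hIoc2s, mul_comm]
    have hE0 : 0 ≤ ∫ s in Set.Ioc 0 a, 2 * s * g s :=
      setIntegral_nonneg measurableSet_Ioc fun s hs =>
        mul_nonneg (by linarith [hs.1] : (0:ℝ) ≤ 2 * s) ENNReal.toReal_nonneg
    have hEa : (∫ s in Set.Ioc 0 a, 2 * s * g s) ≤ a ^ 2 := by
      have h1 : (∫ s in Set.Ioc 0 a, 2 * s * g s) ≤ ∫ s in Set.Ioc 0 a, (2 * s) := by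
        apply setIntegral_mono_on (tail_intOn μ Ψ 0 a)
          (Continuous.integrableOn_Ioc (continuous_const.mul continuous_id)) measurableSet_Ioc
        intro s hs
        have hg1 : g s ≤ 1 := tail_le_one μ _
        have hg0 : 0 ≤ g s := ENNReal.toReal_nonneg
        show 2 * s * g s ≤ 2 * s
        nlinarith [hs.1]
      have h2 : ∫ s in Set.Ioc 0 a, (2 * s) = a ^ 2 := by
        rw [← intervalIntegral.integral_of_le ha.le, intervalIntegral.integral_const_mul,
          integral_id]
        ring
      linarith
    refine ⟨_, hE0, hEa, ?_⟩
    rw [keyid, hsplit, hsec_int, ← intervalIntegral.integral_of_le hab]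
  -- limits
  have haR : Tendsto (fun R : ℝ => a * R) atTop atTop :=
    Tendsto.const_mul_atTop ha tendsto_id
  have hlim1 : Tendsto (fun R => (∫ s in a..(a * R), 2 * s * G s) / R) atTop
      (nhds (a * (2 * L))) := by
    have hces : Tendsto (fun R => (∫ s in a..R, 2 * s * G s) / R) atTop (nhds (2 * L)) := by
      apply cesaro_aux (fun b => hGiint a b)
      have h := hGlim.const_mul 2
      apply h.congr
      intro t; ring
    have hcomp := hces.comp haR
    have h := hcomp.const_mul a
    apply h.congr'
    filter_upwards [eventually_gt_atTop (0:ℝ)] with R hR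
    have hR' : R ≠ 0 := ne_of_gt hR
    have ha' : a ≠ 0 := ne_of_gt ha
    simp only [Function.comp_apply]
    field_simp
  have hlim2 : Tendsto (fun R => G (a * R) * ((a * R) ^ 2 - a ^ 2) / R) atTop
      (nhds (a * L)) := by
    have h1 : Tendsto (fun R => (a * R) * G (a * R)) atTop (nhds L) := by
      have := hGlim.comp haR
      apply this.congr
      intro R; simp [Function.comp_apply]
    have h2 : Tendsto (fun R => ((a * R) * G (a * R)) * a) atTop (nhds (L * a)) :=
      h1.mul_const a
    have h3 : Tendsto (fun R => G (a * R)) atTop (nhds 0) := by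
      have := hGto0.comp haR
      apply this.congr
      intro R; simp [Function.comp_apply]
    have h5 : Tendsto (fun R : ℝ => (G (a * R) * a ^ 2) * R⁻¹) atTop
        (nhds ((0 * a ^ 2) * 0)) := (h3.mul_const (a ^ 2)).mul tendsto_inv_atTop_zero
    have hz : ((0:ℝ) * a ^ 2) * 0 = 0 := by ring
    rw [hz] at h5
    have h6 := h2.sub h5
    have hval : L * a - 0 = a * L := by ring
    rw [hval] at h6
    apply h6.congr'
    filter_upwards [eventually_gt_atTop (0:ℝ)] with R hR
    have hR' : R ≠ 0 := ne_of_gt hR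
    field_simp
  have hmainlim : Tendsto
      (fun R => ((∫ s in a..(a * R), 2 * s * G s) - G (a * R) * ((a * R) ^ 2 - a ^ 2)) / R)
      atTop (nhds (a * L)) := by
    have h := hlim1.sub hlim2
    have hval : a * (2 * L) - a * L = a * L := by ring
    rw [hval] at h
    apply h.congr
    intro R
    rw [sub_div]
  -- error term
  have hElim : Tendsto (fun R =>
      ((∫ x in {x | a ≤ ψ x ∧ ψ x < a * R}, ψ x ^ 2 ∂μ)
        - ((∫ s in a..(a * R), 2 * s * G s) - G (a * R) * ((a * R) ^ 2 - a ^ 2))) / R)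
      atTop (nhds 0) := by
    have hub : Tendsto (fun R : ℝ => a ^ 2 * R⁻¹) atTop (nhds (a ^ 2 * 0)) :=
      tendsto_inv_atTop_zero.const_mul _
    rw [mul_zero] at hub
    apply tendsto_of_tendsto_of_tendsto_of_le_of_le' tendsto_const_nhds hub
    · filter_upwards [eventually_ge_atTop (1:ℝ)] with R hR
      obtain ⟨E, hE0, _, heq⟩ := main_id R hR
      rw [heq]
      have hRpos : (0:ℝ) < R := lt_of_lt_of_le one_pos hR
      have : E + ((∫ s in a..(a * R), 2 * s * G s) - G (a * R) * ((a * R) ^ 2 - a ^ 2))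
          - ((∫ s in a..(a * R), 2 * s * G s) - G (a * R) * ((a * R) ^ 2 - a ^ 2)) = E := by
        ring
      rw [this]
      positivity
    · filter_upwards [eventually_ge_atTop (1:ℝ)] with R hR
      obtain ⟨E, hE0, hEa, heq⟩ := main_id R hR
      rw [heq]
      have hRpos : (0:ℝ) < R := lt_of_lt_of_le one_pos hR
      have hfin : E + ((∫ s in a..(a * R), 2 * s * G s) - G (a * R) * ((a * R) ^ 2 - a ^ 2))
          - ((∫ s in a..(a * R), 2 * s * G s) - G (a * R) * ((a * R) ^ 2 - a ^ 2)) = E := by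
        ring
      rw [hfin, div_eq_mul_inv]
      exact mul_le_mul_of_nonneg_right hEa (by positivity)
  have hIlim : Tendsto (fun R => (∫ x in {x | a ≤ ψ x ∧ ψ x < a * R}, ψ x ^ 2 ∂μ) / R)
      atTop (nhds (a * L)) := by
    have h := hElim.add hmainlim
    rw [zero_add] at h
    apply h.congr
    intro R
    rw [← add_div, sub_add_cancel]
  -- conclusion
  have hvalue : Real.sqrt (a * L) = 2 * Real.sqrt (ε * c) / Real.sqrt π := by
    have hsq : (2 * Real.sqrt (ε * c) / Real.sqrt π) ^ 2 = a * L := by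
      have h1 : Real.sqrt (ε * c) ^ 2 = ε * c := Real.sq_sqrt (by positivity)
      have h2 : Real.sqrt π ^ 2 = π := Real.sq_sqrt hπ.le
      rw [div_pow, mul_pow, h1, h2, ha_def, hL_def]
      field_simp
    rw [← hsq, Real.sqrt_sq (by positivity)]
  rw [← hvalue]
  have hsqrt := hIlim.sqrt
  apply hsqrt.congr'
  filter_upwards [eventually_gt_atTop (0:ℝ)] with R hR
  have hInn : 0 ≤ ∫ x in {x | a ≤ ψ x ∧ ψ x < a * R}, ψ x ^ 2 ∂μ :=
    setIntegral_nonneg (hψmeas measurableSet_Ico) fun x _ => sq_nonneg _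
  rw [Real.sqrt_div hInn R]
end

section
/- Let r be irrational with convergents p_n/q_n. If |r − p/q| ≤ 1/(2q²) for a rational p/q in lowest terms, then p/q is a convergent of the continued fraction expansion of r. -/
open Real

/-- The Gauss map. -/
noncomputable def gaussMap (x : ℝ) : ℝ := Int.fract x⁻¹

/-- `cfCoeff r n` is the `(n+1)`-st continued fraction coefficient `a_{n+1}` of `r`. -/
noncomputable def cfCoeff (r : ℝ) (n : ℕ) : ℕ := (⌊(gaussMap^[n] r)⁻¹⌋).toNat

/-- `qDen r n` is the denominator `q_n` of the `n`-th convergent of `r`. -/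
noncomputable def qDen (r : ℝ) : ℕ → ℕ
  | 0 => 1
  | 1 => cfCoeff r 0
  | (n + 2) => cfCoeff r (n + 1) * qDen r (n + 1) + qDen r n

/-- `pNum r n` is the numerator `p_n` of the `n`-th convergent of `r`. -/
noncomputable def pNum (r : ℝ) : ℕ → ℕ
  | 0 => 0
  | 1 => 1
  | (n + 2) => cfCoeff r (n + 1) * pNum r (n + 1) + pNum r n

/-- Numerator/denominator pair of the convergents of a finite word of partial quotients. -/
def cfAB : List ℕ → ℕ → ℕ × ℕ
  | _, 0 => (0, 1)
  | [], _ + 1 => (0, 1)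
  | a :: l, k + 1 => ((cfAB l k).2, a * (cfAB l k).2 + (cfAB l k).1)

def cfA (l : List ℕ) (k : ℕ) : ℕ := (cfAB l k).1
def cfB (l : List ℕ) (k : ℕ) : ℕ := (cfAB l k).2

/-- Value of a finite continued fraction word with final complete quotient `ω`. -/
noncomputable def cfV : List ℕ → ℝ → ℝ
  | [], ω => ω⁻¹
  | a :: l, ω => ((a : ℝ) + cfV l ω)⁻¹

@[simp] lemma cfA_zero (l : List ℕ) : cfA l 0 = 0 := by cases l <;> rfl
@[simp] lemma cfB_zero (l : List ℕ) : cfB l 0 = 1 := by cases l <;> rfl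
@[simp] lemma cfA_nil (k : ℕ) : cfA [] k = 0 := by cases k <;> rfl
@[simp] lemma cfB_nil (k : ℕ) : cfB [] k = 1 := by cases k <;> rfl
@[simp] lemma cfA_cons_succ (a : ℕ) (l : List ℕ) (k : ℕ) : cfA (a :: l) (k+1) = cfB l k := rfl
@[simp] lemma cfB_cons_succ (a : ℕ) (l : List ℕ) (k : ℕ) :
    cfB (a :: l) (k+1) = a * cfB l k + cfA l k := rfl

lemma cfB_one_le (l : List ℕ) (hl : ∀ x ∈ l, 1 ≤ x) : ∀ k, 1 ≤ cfB l k := by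
  induction l with
  | nil => intro k; simp
  | cons a l ih =>
    intro k
    cases k with
    | zero => simp
    | succ k =>
      have ha : 1 ≤ a := hl a List.mem_cons_self
      have := ih (fun x hx => hl x (List.mem_cons_of_mem _ hx)) k
      simp only [cfB_cons_succ]
      calc 1 = 1 * 1 := rfl
        _ ≤ a * cfB l k := Nat.mul_le_mul ha this
        _ ≤ a * cfB l k + cfA l k := Nat.le_add_right _ _

lemma cfCoeff_succ (r : ℝ) (n : ℕ) : cfCoeff r (n+1) = cfCoeff (gaussMap r) n := by
  simp [cfCoeff, Function.iterate_succ_apply]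

lemma pNum_qDen_succ (r : ℝ) (k : ℕ) :
    pNum r (k+1) = qDen (gaussMap r) k ∧
      qDen r (k+1) = cfCoeff r 0 * qDen (gaussMap r) k + pNum (gaussMap r) k := by
  induction k using Nat.strong_induction_on with
  | _ k ih =>
    rcases k with (_|_|k)
    · simp [pNum, qDen]
    · constructor
      · have : pNum r 2 = cfCoeff r 1 * pNum r 1 + pNum r 0 := by simp [pNum]
        rw [this]
        simp [pNum, qDen, cfCoeff_succ]
      · have h1 : qDen r 2 = cfCoeff r 1 * qDen r 1 + qDen r 0 := by simp [qDen]
        rw [h1]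
        simp [pNum, qDen, cfCoeff_succ]
        ring
    · have ih1 := ih (k+1) (by omega)
      have ih0 := ih k (by omega)
      constructor
      · have : pNum r (k+3) = cfCoeff r (k+2) * pNum r (k+2) + pNum r (k+1) := by simp [pNum]
        rw [this, ih1.1, ih0.1, cfCoeff_succ]
        have : qDen (gaussMap r) (k+2) =
            cfCoeff (gaussMap r) (k+1) * qDen (gaussMap r) (k+1) + qDen (gaussMap r) k := by
          simp [qDen]
        rw [this]
      · have h1 : qDen r (k+3) = cfCoeff r (k+2) * qDen r (k+2) + qDen r (k+1) := by simp [qDen]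
        rw [h1, ih1.2, ih0.2, cfCoeff_succ]
        have h2 : qDen (gaussMap r) (k+2) =
            cfCoeff (gaussMap r) (k+1) * qDen (gaussMap r) (k+1) + qDen (gaussMap r) k := by
          simp [qDen]
        have h3 : pNum (gaussMap r) (k+2) =
            cfCoeff (gaussMap r) (k+1) * pNum (gaussMap r) (k+1) + pNum (gaussMap r) k := by
          simp [pNum]
        rw [h2, h3]
        ring

lemma cfV_mem (l : List ℕ) (hl : ∀ x ∈ l, 1 ≤ x) (ω : ℝ) (hω : 1 < ω) :
    cfV l ω ∈ Set.Ioo (0:ℝ) 1 := by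
  induction l with
  | nil =>
    constructor
    · simp only [cfV]; exact inv_pos.mpr (by linarith)
    · simp only [cfV]; exact inv_lt_one_of_one_lt₀ hω
  | cons a l ih =>
    have ht := ih (fun x hx => hl x (List.mem_cons_of_mem _ hx))
    have ha : 1 ≤ a := hl a List.mem_cons_self
    have ha' : (1:ℝ) ≤ (a:ℝ) := by exact_mod_cast ha
    constructor
    · simp only [cfV]; exact inv_pos.mpr (by linarith [ht.1])
    · simp only [cfV]; exact inv_lt_one_of_one_lt₀ (by linarith [ht.1])

lemma gauss_cfV (a : ℕ) (l : List ℕ) (hl : ∀ x ∈ a::l, 1 ≤ x) (ω : ℝ) (hω : 1 < ω) :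
    gaussMap (cfV (a::l) ω) = cfV l ω ∧ cfCoeff (cfV (a::l) ω) 0 = a := by
  have ht := cfV_mem l (fun x hx => hl x (List.mem_cons_of_mem _ hx)) ω hω
  have h1 : (cfV (a::l) ω)⁻¹ = (a:ℝ) + cfV l ω := by
    show (((a : ℝ) + cfV l ω)⁻¹)⁻¹ = _
    rw [inv_inv]
  have hcast : ((a:ℝ)) = ((a:ℤ):ℝ) := by push_cast; ring
  constructor
  · rw [gaussMap, h1, hcast, Int.fract_intCast_add]
    exact Int.fract_eq_self.mpr ⟨ht.1.le, ht.2⟩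
  · rw [cfCoeff]
    simp only [Function.iterate_zero_apply]
    rw [h1, hcast, Int.floor_intCast_add]
    rw [Int.floor_eq_zero_iff.mpr ⟨ht.1.le, ht.2⟩]
    simp

lemma conv (l : List ℕ) (hl : ∀ x ∈ l, 1 ≤ x) (ω : ℝ) (hω : 1 < ω) :
    ∀ k, k ≤ l.length → pNum (cfV l ω) k = cfA l k ∧ qDen (cfV l ω) k = cfB l k := by
  induction l with
  | nil =>
    intro k hk
    have : k = 0 := Nat.le_zero.mp hk
    subst this
    simp [pNum, qDen]
  | cons a l ih =>
    intro k hk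
    obtain ⟨hg, hc⟩ := gauss_cfV a l hl ω hω
    cases k with
    | zero => simp [pNum, qDen]
    | succ k =>
      have hk' : k ≤ l.length := by simpa using hk
      have IH := ih (fun x hx => hl x (List.mem_cons_of_mem _ hx)) k hk'
      obtain ⟨L1, L2⟩ := pNum_qDen_succ (cfV (a::l) ω) k
      constructor
      · rw [L1, hg, IH.2]; rfl
      · rw [L2, hg, hc, IH.1, IH.2]; rfl

lemma cfDet : ∀ (l : List ℕ) (k : ℕ), k + 1 ≤ l.length →
    (cfA l k : ℤ) * cfB l (k+1) - cfA l (k+1) * cfB l k = (-1)^(k+1) := by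
  intro l
  induction l with
  | nil => intro k hk; simp at hk
  | cons a l ih =>
    intro k hk
    cases k with
    | zero => simp
    | succ k =>
      have h := ih k (by simpa using hk)
      simp only [cfA_cons_succ, cfB_cons_succ]
      push_cast
      have hp : ((-1:ℤ))^(k+1+1) = -(-1)^(k+1) := by ring
      rw [hp]
      linear_combination -h

lemma cfB_mono (l : List ℕ) (hl : ∀ x ∈ l, 1 ≤ x) :
    ∀ k, k + 1 ≤ l.length → cfA l k ≤ cfA l (k+1) ∧ cfB l k ≤ cfB l (k+1) := by
  induction l with
  | nil => intro k hk; simp at hk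
  | cons a l ih =>
    intro k hk
    have ha : 1 ≤ a := hl a List.mem_cons_self
    have hl' : ∀ x ∈ l, 1 ≤ x := fun x hx => hl x (List.mem_cons_of_mem _ hx)
    cases k with
    | zero =>
      constructor
      · simp
      · simp only [cfB_zero, cfB_cons_succ, cfA_zero, cfB_zero]
        calc 1 ≤ a := ha
          _ = a * 1 + 0 := by ring
    | succ k =>
      have h := ih hl' k (by simpa using hk)
      constructor
      · simpa using h.2
      · simp only [cfB_cons_succ]
        exact Nat.add_le_add (Nat.mul_le_mul_left _ h.2) h.1

lemma cfV_eq : ∀ (l : List ℕ) (a : ℕ), (∀ x ∈ a::l, 1 ≤ x) → ∀ ω : ℝ, 1 < ω →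
    cfV (a::l) ω = ((cfA (a::l) (l.length+1) : ℝ) * ω + (cfA (a::l) l.length : ℝ)) /
      ((cfB (a::l) (l.length+1) : ℝ) * ω + (cfB (a::l) l.length : ℝ)) := by
  intro l
  induction l with
  | nil =>
    intro a hl ω hω
    have ha : 1 ≤ a := hl a List.mem_cons_self
    have ha' : (1:ℝ) ≤ (a:ℝ) := by exact_mod_cast ha
    show ((a:ℝ) + ω⁻¹)⁻¹ = _
    simp only [List.length_nil, cfA_cons_succ, cfA_zero, cfB_cons_succ, cfB_zero, cfA_nil,
      cfB_nil, Nat.cast_one, Nat.cast_zero, Nat.cast_mul]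
    have hω0 : ω ≠ 0 := by linarith
    have h1 : (a:ℝ) + ω⁻¹ ≠ 0 := by positivity
    have h2 : (a:ℝ) * 1 * ω + 1 ≠ 0 := by positivity
    field_simp
    push_cast; ring
  | cons b l ih =>
    intro a hl ω hω
    have hl' : ∀ x ∈ b::l, 1 ≤ x := fun x hx => hl x (List.mem_cons_of_mem _ hx)
    have hIH := ih b hl' ω hω
    have hB1 : 1 ≤ cfB (b::l) (l.length+1) := cfB_one_le _ hl' _
    have hB0 : 1 ≤ cfB (b::l) l.length := cfB_one_le _ hl' _
    have hB1' : (1:ℝ) ≤ (cfB (b::l) (l.length+1) : ℝ) := by exact_mod_cast hB1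
    have hB0' : (1:ℝ) ≤ (cfB (b::l) l.length : ℝ) := by exact_mod_cast hB0
    have hden : (0:ℝ) < (cfB (b::l) (l.length+1) : ℝ) * ω + (cfB (b::l) l.length : ℝ) := by
      nlinarith
    have hDne : (cfB (b::l) (l.length+1) : ℝ) * ω + (cfB (b::l) l.length : ℝ) ≠ 0 :=
      ne_of_gt hden
    show ((a:ℝ) + cfV (b::l) ω)⁻¹ = _
    have e1 : cfA (a::b::l) ((b::l).length+1) = cfB (b::l) (l.length+1) := rfl
    have e2 : cfA (a::b::l) ((b::l).length) = cfB (b::l) l.length := rfl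
    have e3 : cfB (a::b::l) ((b::l).length+1)
        = a * cfB (b::l) (l.length+1) + cfA (b::l) (l.length+1) := rfl
    have e4 : cfB (a::b::l) ((b::l).length)
        = a * cfB (b::l) l.length + cfA (b::l) l.length := rfl
    have h3 : (a:ℝ) + ((cfA (b::l) (l.length+1):ℝ) * ω + (cfA (b::l) l.length:ℝ)) /
        ((cfB (b::l) (l.length+1):ℝ) * ω + (cfB (b::l) l.length:ℝ)) =
        ((a:ℝ) * ((cfB (b::l) (l.length+1):ℝ) * ω + (cfB (b::l) l.length:ℝ)) +
          ((cfA (b::l) (l.length+1):ℝ) * ω + (cfA (b::l) l.length:ℝ))) /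
        ((cfB (b::l) (l.length+1):ℝ) * ω + (cfB (b::l) l.length:ℝ)) := by
      rw [eq_div_iff hDne, add_mul, div_mul_cancel₀ _ hDne]
    rw [e1, e2, e3, e4, hIH, h3, inv_div]
    congr 1
    push_cast
    ring

lemma exists_expansion : ∀ p q c : ℕ, 0 < p → p < q → Nat.gcd p q = 1 →
    ∃ l : List ℕ, l ≠ [] ∧ (∀ x ∈ l, 1 ≤ x) ∧ l.length % 2 = c % 2 ∧
      cfA l l.length = p ∧ cfB l l.length = q := by
  intro p
  induction p using Nat.strong_induction_on with
  | _ p ih =>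
    intro q c hp hpq hg
    rcases eq_or_lt_of_le (show 1 ≤ p from hp) with h1 | h2
    · -- p = 1
      have hq2 : 2 ≤ q := by omega
      by_cases hc : c % 2 = 1
      · refine ⟨[q], by simp, ?_, by simp [hc], ?_, ?_⟩
        · intro x hx; simp at hx; omega
        · simp [← h1]
        · simp
      · refine ⟨[q-1, 1], by simp, ?_, by simp; omega, ?_, ?_⟩
        · intro x hx; simp at hx; rcases hx with h | h <;> omega
        · simp [← h1]
        · show (q-1) * cfB [1] 1 + cfA [1] 1 = q
          simp; omega
    · -- 2 ≤ p
      have hs : q % p ≠ 0 := by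
        intro h
        have : p ∣ q := Nat.dvd_of_mod_eq_zero h
        have := Nat.gcd_eq_left this
        omega
      have hg' : Nat.gcd (q % p) p = 1 := by
        rw [← Nat.gcd_rec]; exact hg
      obtain ⟨l, h1, h2', h3, h4, h5⟩ :=
        ih (q % p) (Nat.mod_lt q hp) p (c+1) (Nat.pos_of_ne_zero hs) (Nat.mod_lt q hp) hg'
      have ha : 1 ≤ q / p := (Nat.one_le_div_iff hp).mpr (le_of_lt hpq)
      refine ⟨(q / p) :: l, by simp, ?_, ?_, ?_, ?_⟩
      · intro x hx
        rcases List.mem_cons.mp hx with h | h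
        · omega
        · exact h2' x h
      · simp only [List.length_cons]; omega
      · simp only [List.length_cons, cfA_cons_succ]; exact h5
      · simp only [List.length_cons, cfB_cons_succ]
        rw [h4, h5, Nat.mul_comm]
        exact Nat.div_add_mod q p

lemma omega_odd (r Pn Qn P' Q' : ℝ) (hQ : 0 < Qn) (hdet : Pn*Q' - P'*Qn = 1)
    (hQ'le : Q' ≤ Qn) (eB : 2*Pn*Qn - 2*r*Qn^2 < 1)
    (hcase : r*Qn < Pn) : Pn - r*Qn < r*Q' - P' := by
  have f1 : (2*Pn - 2*r*Qn)*Qn < 1 := by nlinarith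
  have f2 : (2*Pn - 2*r*Qn) * Q' ≤ (2*Pn - 2*r*Qn) * Qn :=
    mul_le_mul_of_nonneg_left hQ'le (by nlinarith)
  nlinarith [mul_pos hQ hQ]
lemma omega_even (r Pn Qn P' Q' : ℝ) (hQ : 0 < Qn) (hdet : P'*Qn - Pn*Q' = 1)
    (hQ'le : Q' ≤ Qn) (eA : 2*r*Qn^2 - 2*Pn*Qn < 1)
    (hcase : Pn < r*Qn) : r*Qn - Pn < P' - r*Q' := by
  have f1 : (2*r*Qn - 2*Pn)*Qn < 1 := by nlinarith
  have f2 : (2*r*Qn - 2*Pn) * Q' ≤ (2*r*Qn - 2*Pn) * Qn :=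
    mul_le_mul_of_nonneg_left hQ'le (by nlinarith)
  nlinarith [mul_pos hQ hQ]


/-- Legendre's theorem: a reduced fraction `p/q` with `|r − p/q| ≤ 1/(2q²)` is a
convergent of the continued fraction expansion of `r`. -/
theorem stmt_10 (r : ℝ) (hr01 : r ∈ Set.Ioo (0:ℝ) 1) (hr : Irrational r) (p : ℤ) (q : ℕ) (hq : 0 < q)
    (hcop : Int.gcd p (q : ℤ) = 1)
    (happrox : |r - (p : ℝ) / (q : ℝ)| ≤ 1 / (2 * (q : ℝ) ^ 2)) :
    ∃ n : ℕ, (p : ℝ) / (q : ℝ) = (pNum r n : ℝ) / (qDen r n : ℝ) := by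
  obtain ⟨hr0, hr1⟩ := hr01
  have hQ : (0:ℝ) < (q:ℝ) := by exact_mod_cast hq
  have hQ1 : (1:ℝ) ≤ (q:ℝ) := by exact_mod_cast hq
  have hQne : (q:ℝ) ≠ 0 := ne_of_gt hQ
  -- strict inequality
  have hne_bound : |r - (p:ℝ)/(q:ℝ)| ≠ 1/(2*(q:ℝ)^2) := by
    intro h
    rcases (abs_eq (by positivity)).mp h with h' | h'
    · exact hr ⟨(p:ℚ)/(q:ℚ) + 1/(2*(q:ℚ)^2), by push_cast; linarith⟩
    · exact hr ⟨(p:ℚ)/(q:ℚ) - 1/(2*(q:ℚ)^2), by push_cast; linarith⟩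
  have hlt : |r - (p:ℝ)/(q:ℝ)| < 1/(2*(q:ℝ)^2) := lt_of_le_of_ne happrox hne_bound
  rw [abs_lt] at hlt
  have eA : 2*r*(q:ℝ)^2 - 2*(p:ℝ)*(q:ℝ) < 1 := by
    have h := hlt.2
    rw [lt_div_iff₀ (by positivity : (0:ℝ) < 2*(q:ℝ)^2)] at h
    have hh : (r - (p:ℝ)/(q:ℝ)) * (2*(q:ℝ)^2) = 2*r*(q:ℝ)^2 - 2*(p:ℝ)*(q:ℝ) := by
      field_simp
    rw [hh] at h; linarith
  have eB : 2*(p:ℝ)*(q:ℝ) - 2*r*(q:ℝ)^2 < 1 := by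
    have h := hlt.1
    rw [neg_lt, lt_div_iff₀ (by positivity : (0:ℝ) < 2*(q:ℝ)^2)] at h
    have hh : -(r - (p:ℝ)/(q:ℝ)) * (2*(q:ℝ)^2) = 2*(p:ℝ)*(q:ℝ) - 2*r*(q:ℝ)^2 := by
      field_simp; ring
    rw [hh] at h; linarith
  have hp0 : 0 ≤ p := by
    by_contra h
    push_neg at h
    have hp1 : (p:ℝ) ≤ -1 := by
      have : p ≤ -1 := by omega
      exact_mod_cast this
    nlinarith [mul_pos hr0 (mul_pos hQ hQ), mul_le_mul_of_nonneg_right hp1 hQ.le]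
  have hpq : p ≤ (q:ℤ) := by
    by_contra h
    push_neg at h
    have hp1 : (q:ℝ) + 1 ≤ (p:ℝ) := by exact_mod_cast h
    nlinarith [mul_le_mul_of_nonneg_right hp1 hQ.le,
      mul_lt_mul_of_pos_right hr1 (mul_pos hQ hQ)]
  lift p to ℕ using hp0 with pn
  push_cast at eA eB hpq hlt ⊢
  have hcop' : Nat.gcd pn q = 1 := by
    simpa [Int.gcd] using hcop
  rcases Nat.eq_zero_or_pos pn with h0 | hpn0
  · subst h0
    exact ⟨0, by simp [pNum, qDen]⟩
  have hpq' : pn ≤ q := by exact_mod_cast hpq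
  rcases eq_or_lt_of_le hpq' with heq | hlt2
  · -- pn = q, so q = 1
    have hq1 : q = 1 := by
      rw [heq] at hcop'
      simpa using hcop'
    have hpn1 : pn = 1 := by omega
    subst hq1; subst hpn1
    refine ⟨1, ?_⟩
    have hrhalf : 1/2 < r := by
      push_cast at eB
      nlinarith
    have hrr : r * r⁻¹ = 1 := mul_inv_cancel₀ (ne_of_gt hr0)
    have h2 : (1:ℝ) < r⁻¹ := by nlinarith
    have h3 : r⁻¹ < 2 := by nlinarith
    have hfl : ⌊r⁻¹⌋ = 1 := by
      rw [Int.floor_eq_iff]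
      constructor
      · exact_mod_cast h2.le
      · push_cast; linarith
    have hcf : cfCoeff r 0 = 1 := by
      rw [cfCoeff]
      simp [hfl]
    simp [pNum, qDen, hcf]
  · -- main case : 0 < pn < q
    have hne : r * (q:ℝ) ≠ (pn:ℝ) := by
      intro h
      apply hr
      refine ⟨(pn:ℚ)/(q:ℚ), ?_⟩
      push_cast
      rw [div_eq_iff hQne]
      linarith
    rcases lt_or_gt_of_ne hne with hcase | hcase
    · -- r*q < pn : odd case
      obtain ⟨l, hlne, hl1, hpar, hA, hB⟩ := exists_expansion pn q 1 hpn0 hlt2 hcop'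
      obtain ⟨a, l', rfl⟩ := List.exists_cons_of_ne_nil hlne
      have hlen : (a::l').length = l'.length + 1 := rfl
      rw [hlen] at hA hB hpar
      have hdet := cfDet (a::l') l'.length (le_of_eq hlen.symm)
      have hod : (-1:ℤ)^(l'.length+1) = -1 :=
        Odd.neg_one_pow (Nat.odd_iff.mpr (by omega))
      rw [hod, hA, hB] at hdet
      have hdetR : (pn:ℝ) * (cfB (a::l') l'.length : ℝ)
          - (cfA (a::l') l'.length : ℝ) * (q:ℝ) = 1 := by
        have : (pn:ℤ) * (cfB (a::l') l'.length : ℤ)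
            - (cfA (a::l') l'.length : ℤ) * (q:ℤ) = 1 := by linarith [hdet]
        exact_mod_cast this
      have hQ'le : (cfB (a::l') l'.length : ℝ) ≤ (q:ℝ) := by
        have h := (cfB_mono (a::l') hl1 l'.length (le_of_eq hlen.symm)).2
        rw [hB] at h
        exact_mod_cast h
      have hden : (0:ℝ) < (pn:ℝ) - r*(q:ℝ) := by linarith
      have hQ'0 : (0:ℝ) ≤ (cfB (a::l') l'.length : ℝ) := Nat.cast_nonneg _
      have hP'0 : (0:ℝ) ≤ (cfA (a::l') l'.length : ℝ) := Nat.cast_nonneg _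
      have hnum : (pn:ℝ) - r*(q:ℝ) < r*(cfB (a::l') l'.length : ℝ)
          - (cfA (a::l') l'.length : ℝ) :=
        omega_odd r (pn:ℝ) (q:ℝ) (cfA (a::l') l'.length : ℝ) (cfB (a::l') l'.length : ℝ)
          hQ hdetR hQ'le (by linarith) hcase
      set ω : ℝ := (r*(cfB (a::l') l'.length : ℝ) - (cfA (a::l') l'.length : ℝ)) /
        ((pn:ℝ) - r*(q:ℝ)) with hωdef
      have hω : 1 < ω := (one_lt_div hden).mpr hnum
      have hωmul : ω * ((pn:ℝ) - r*(q:ℝ))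
          = r*(cfB (a::l') l'.length : ℝ) - (cfA (a::l') l'.length : ℝ) :=
        div_mul_cancel₀ _ (ne_of_gt hden)
      have hVden : (0:ℝ) < (q:ℝ)*ω + (cfB (a::l') l'.length : ℝ) := by
        have h1 : (0:ℝ) < (q:ℝ)*ω := mul_pos hQ (by linarith)
        linarith
      have hr_eq : r = cfV (a::l') ω := by
        rw [cfV_eq l' a hl1 ω hω, hA, hB, eq_div_iff (ne_of_gt hVden)]
        linear_combination -hωmul
      refine ⟨l'.length + 1, ?_⟩
      have hconv := conv (a::l') hl1 ω hω (l'.length+1) (le_of_eq hlen.symm)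
      rw [hr_eq, hconv.1, hconv.2, hA, hB]
    · -- pn < r*q : even case
      obtain ⟨l, hlne, hl1, hpar, hA, hB⟩ := exists_expansion pn q 0 hpn0 hlt2 hcop'
      obtain ⟨a, l', rfl⟩ := List.exists_cons_of_ne_nil hlne
      have hlen : (a::l').length = l'.length + 1 := rfl
      rw [hlen] at hA hB hpar
      have hdet := cfDet (a::l') l'.length (le_of_eq hlen.symm)
      have hev : (-1:ℤ)^(l'.length+1) = 1 :=
        Even.neg_one_pow (Nat.even_iff.mpr (by omega))
      rw [hev, hA, hB] at hdet
      have hdetR : (cfA (a::l') l'.length : ℝ) * (q:ℝ)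
          - (pn:ℝ) * (cfB (a::l') l'.length : ℝ) = 1 := by exact_mod_cast hdet
      have hQ'le : (cfB (a::l') l'.length : ℝ) ≤ (q:ℝ) := by
        have h := (cfB_mono (a::l') hl1 l'.length (le_of_eq hlen.symm)).2
        rw [hB] at h
        exact_mod_cast h
      have hden : (0:ℝ) < r*(q:ℝ) - (pn:ℝ) := by linarith
      have hQ'0 : (0:ℝ) ≤ (cfB (a::l') l'.length : ℝ) := Nat.cast_nonneg _
      have hP'0 : (0:ℝ) ≤ (cfA (a::l') l'.length : ℝ) := Nat.cast_nonneg _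
      have hnum : r*(q:ℝ) - (pn:ℝ) < (cfA (a::l') l'.length : ℝ)
          - r*(cfB (a::l') l'.length : ℝ) :=
        omega_even r (pn:ℝ) (q:ℝ) (cfA (a::l') l'.length : ℝ) (cfB (a::l') l'.length : ℝ)
          hQ hdetR hQ'le (by linarith) hcase
      set ω : ℝ := ((cfA (a::l') l'.length : ℝ) - r*(cfB (a::l') l'.length : ℝ)) /
        (r*(q:ℝ) - (pn:ℝ)) with hωdef
      have hω : 1 < ω := (one_lt_div hden).mpr hnum
      have hωmul : ω * (r*(q:ℝ) - (pn:ℝ))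
          = (cfA (a::l') l'.length : ℝ) - r*(cfB (a::l') l'.length : ℝ) :=
        div_mul_cancel₀ _ (ne_of_gt hden)
      have hVden : (0:ℝ) < (q:ℝ)*ω + (cfB (a::l') l'.length : ℝ) := by
        have h1 : (0:ℝ) < (q:ℝ)*ω := mul_pos hQ (by linarith)
        linarith
      have hr_eq : r = cfV (a::l') ω := by
        rw [cfV_eq l' a hl1 ω hω, hA, hB, eq_div_iff (ne_of_gt hVden)]
        linear_combination hωmul
      refine ⟨l'.length + 1, ?_⟩
      have hconv := conv (a::l') hl1 ω hω (l'.length+1) (le_of_eq hlen.symm)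
      rw [hr_eq, hconv.1, hconv.2, hA, hB]
end
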